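/- The single-mode KMB scalar curvature Scal(ν) = -[(2ν - f(ν) + 4ν² f(ν))(f(ν) + 2ν(-1 + 6ν f(ν)))] / [8ν²(4ν² - 1) f(ν)²], with f(ν) = arccoth(2ν), tends to -∞ as ν → 1/2 from above. -/

import Mathlib

open Filter Real Set Topology

/-- `arccoth y = (1/2) ln((y+1)/(y-1))`. -/
noncomputable def arccoth (x : ℝ) : ℝ := (1/2) * Real.log ((x + 1) / (x - 1))

/-- The single-mode KMB scalar curvature
`Scal(ν) = -[(2ν - f(ν) + 4ν² f(ν))(f(ν) + 2ν(-1 + 6ν f(ν)))] / [8ν²(4ν² - 1) f(ν)²]`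
with `f(ν) = arccoth(2ν)`. -/
noncomputable def Scal1 (ν : ℝ) : ℝ :=
  -((2*ν - arccoth (2*ν) + 4*ν^2 * arccoth (2*ν))
      * (arccoth (2*ν) + 2*ν*(-1 + 6*ν*arccoth (2*ν))))
    / (8*ν^2*(4*ν^2 - 1) * (arccoth (2*ν))^2)

lemma contAtTendsto {f : ℝ → ℝ} (hf : ContinuousAt f (1/2)) {b : ℝ} (h : f (1/2) = b) :
    Tendsto f (𝓝[>] (1/2)) (𝓝 b) :=
  h ▸ hf.tendsto.mono_left nhdsWithin_le_nhds

lemma tend_t : Tendsto (fun ν : ℝ => 2*ν - 1) (𝓝[>] (1/2)) (𝓝[>] 0) := by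
  apply tendsto_nhdsWithin_of_tendsto_nhds_of_eventually_within
  · exact contAtTendsto (by fun_prop) (by norm_num)
  · filter_upwards [self_mem_nhdsWithin] with ν hν
    simp only [mem_Ioi] at *
    linarith

/-- `s(ν) = √(2ν-1) · arccoth(2ν) → 0`. -/
lemma tend_s : Tendsto (fun ν : ℝ => Real.sqrt (2*ν - 1) * arccoth (2*ν))
    (𝓝[>] (1/2)) (𝓝 0) := by
  have h1 : Tendsto (fun ν : ℝ => Real.sqrt (2*ν - 1) * ((1:ℝ)/2 * Real.log (2*ν + 1)))
      (𝓝[>] (1/2)) (𝓝 0) := by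
    have c1 : ContinuousAt (fun ν : ℝ => Real.sqrt (2*ν - 1)) (1/2) :=
      (Real.continuous_sqrt.comp (by fun_prop : Continuous fun ν : ℝ => 2*ν - 1)).continuousAt
    have c2 : ContinuousAt (fun ν : ℝ => Real.log (2*ν + 1)) (1/2) :=
      ContinuousAt.log ((by fun_prop : Continuous fun ν : ℝ => 2*ν + 1).continuousAt)
        (by norm_num)
    refine contAtTendsto (c1.mul (c2.const_mul _)) (by norm_num)
  have h2 : Tendsto (fun ν : ℝ => (1:ℝ)/2 * (Real.log (2*ν - 1) * (2*ν - 1) ^ ((1:ℝ)/2)))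
      (𝓝[>] (1/2)) (𝓝 0) := by
    have := ((tendsto_log_mul_rpow_nhdsGT_zero (by norm_num : (0:ℝ) < 1/2)).comp
      tend_t).const_mul ((1:ℝ)/2)
    simpa [Function.comp] using this
  have h := h1.sub h2
  rw [show (0:ℝ) - 0 = 0 by ring] at h
  refine h.congr' ?_
  filter_upwards [self_mem_nhdsWithin] with ν hν
  simp only [mem_Ioi] at hν
  have ht : (0:ℝ) < 2*ν - 1 := by linarith
  have hsq : Real.sqrt (2*ν - 1) = (2*ν - 1) ^ ((1:ℝ)/2) := Real.sqrt_eq_rpow _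
  have hlog : Real.log ((2*ν + 1) / (2*ν - 1)) = Real.log (2*ν + 1) - Real.log (2*ν - 1) :=
    Real.log_div (by linarith) (ne_of_gt ht)
  simp only [arccoth]
  rw [show (2*ν + 1 : ℝ) = 2*ν + 1 by ring, hlog, hsq]
  ring

lemma arccoth_pos {ν : ℝ} (hν : (1:ℝ)/2 < ν) : 0 < arccoth (2*ν) := by
  have ht : (0:ℝ) < 2*ν - 1 := by linarith
  have h1 : (1:ℝ) < (2*ν + 1) / (2*ν - 1) := by
    rw [lt_div_iff₀ ht]; linarith
  have := Real.log_pos h1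
  simp only [arccoth]
  positivity

/-- `arccoth(2ν) → +∞`. -/
lemma tend_f : Tendsto (fun ν : ℝ => arccoth (2*ν)) (𝓝[>] (1/2)) atTop := by
  have hinv : Tendsto (fun ν : ℝ => (2*ν - 1)⁻¹) (𝓝[>] (1/2)) atTop :=
    tend_t.inv_tendsto_nhdsGT_zero
  have hnum : Tendsto (fun ν : ℝ => 2*ν + 1) (𝓝[>] (1/2)) (𝓝 2) :=
    contAtTendsto (by fun_prop) (by norm_num)
  have hr : Tendsto (fun ν : ℝ => (2*ν + 1) / (2*ν - 1)) (𝓝[>] (1/2)) atTop := by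
    simpa [div_eq_mul_inv] using hnum.pos_mul_atTop (by norm_num) hinv
  have h := Tendsto.const_mul_atTop (show (0:ℝ) < 1/2 by norm_num)
    (Real.tendsto_log_atTop.comp hr)
  refine h.congr fun ν => ?_
  simp [arccoth, Function.comp]

/-- The second numerator factor tends to `+∞`. -/
lemma tend_B : Tendsto (fun ν : ℝ => arccoth (2*ν) + 2*ν*(-1 + 6*ν*arccoth (2*ν)))
    (𝓝[>] (1/2)) atTop := by
  have h12 : Tendsto (fun ν : ℝ => 12*ν^2) (𝓝[>] (1/2)) (𝓝 3) :=
    contAtTendsto (by fun_prop) (by norm_num)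
  have h1 : Tendsto (fun ν : ℝ => 12*ν^2 * arccoth (2*ν)) (𝓝[>] (1/2)) atTop :=
    h12.pos_mul_atTop (by norm_num) tend_f
  have h2 : Tendsto (fun ν : ℝ => arccoth (2*ν) + 12*ν^2 * arccoth (2*ν))
      (𝓝[>] (1/2)) atTop := Tendsto.atTop_add_atTop tend_f h1
  have hc : Tendsto (fun ν : ℝ => -(2*ν)) (𝓝[>] (1/2)) (𝓝 (-1)) :=
    contAtTendsto (by fun_prop) (by norm_num)
  have := hc.add_atTop h2
  refine this.congr fun ν => by ring

/-- The quantity `(4ν²-1)·arccoth(2ν)² → 0⁺`. -/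
lemma tend_G : Tendsto (fun ν : ℝ => (4*ν^2 - 1) * (arccoth (2*ν))^2)
    (𝓝[>] (1/2)) (𝓝[>] 0) := by
  apply tendsto_nhdsWithin_of_tendsto_nhds_of_eventually_within
  · have hnum : Tendsto (fun ν : ℝ => 2*ν + 1) (𝓝[>] (1/2)) (𝓝 2) :=
      contAtTendsto (by fun_prop) (by norm_num)
    have h := hnum.mul (tend_s.mul tend_s)
    rw [show (2:ℝ) * (0 * 0) = 0 by ring] at h
    refine h.congr' ?_
    filter_upwards [self_mem_nhdsWithin] with ν hν
    simp only [mem_Ioi] at hν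
    have ht : (0:ℝ) ≤ 2*ν - 1 := by linarith
    have hsq : Real.sqrt (2*ν - 1) * Real.sqrt (2*ν - 1) = 2*ν - 1 := Real.mul_self_sqrt ht
    linear_combination ((2*ν + 1) * (arccoth (2*ν))^2) * hsq
  · filter_upwards [self_mem_nhdsWithin] with ν hν
    simp only [mem_Ioi] at hν ⊢
    have h1 : (0:ℝ) < 4*ν^2 - 1 := by nlinarith
    have h2 := arccoth_pos hν
    positivity

/-- The first numerator factor tends to `1`. -/
lemma tend_A : Tendsto (fun ν : ℝ => 2*ν - arccoth (2*ν) + 4*ν^2 * arccoth (2*ν))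
    (𝓝[>] (1/2)) (𝓝 1) := by
  have hnum : Tendsto (fun ν : ℝ => (2*ν + 1) * Real.sqrt (2*ν - 1)) (𝓝[>] (1/2)) (𝓝 0) := by
    have c1 : ContinuousAt (fun ν : ℝ => Real.sqrt (2*ν - 1)) (1/2) :=
      (Real.continuous_sqrt.comp (by fun_prop : Continuous fun ν : ℝ => 2*ν - 1)).continuousAt
    exact contAtTendsto ((by fun_prop : Continuous fun ν : ℝ => 2*ν + 1).continuousAt.mul c1)
      (by norm_num)
  have h2ν : Tendsto (fun ν : ℝ => 2*ν) (𝓝[>] (1/2)) (𝓝 1) :=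
    contAtTendsto (by fun_prop) (by norm_num)
  have h := h2ν.add (hnum.mul tend_s)
  rw [show (1:ℝ) + 0 * 0 = 1 by ring] at h
  refine h.congr' ?_
  filter_upwards [self_mem_nhdsWithin] with ν hν
  simp only [mem_Ioi] at hν
  have ht : (0:ℝ) ≤ 2*ν - 1 := by linarith
  have hsq : Real.sqrt (2*ν - 1) * Real.sqrt (2*ν - 1) = 2*ν - 1 := Real.mul_self_sqrt ht
  linear_combination ((2*ν + 1) * arccoth (2*ν)) * hsq

/-- The single-mode scalar curvature tends to `-∞` as `ν → 1/2⁺`. -/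
theorem scal1_tendsto_atBot :
    Filter.Tendsto Scal1 (nhdsWithin (1/2) (Set.Ioi (1/2 : ℝ))) Filter.atBot := by
  have hden : Tendsto (fun ν : ℝ => 8*ν^2) (𝓝[>] (1/2)) (𝓝 2) :=
    contAtTendsto (by fun_prop) (by norm_num)
  have hC := (tend_A.neg).div hden (by norm_num : (2:ℝ) ≠ 0)
  have hBG : Tendsto (fun ν : ℝ =>
      (arccoth (2*ν) + 2*ν*(-1 + 6*ν*arccoth (2*ν))) / ((4*ν^2 - 1) * (arccoth (2*ν))^2))
      (𝓝[>] (1/2)) atTop := by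
    have hinv : Tendsto (fun ν : ℝ => ((4*ν^2 - 1) * (arccoth (2*ν))^2)⁻¹)
        (𝓝[>] (1/2)) atTop := tend_G.inv_tendsto_nhdsGT_zero
    simpa [div_eq_mul_inv] using tend_B.atTop_mul_atTop₀ hinv
  have h := hC.neg_mul_atTop (by norm_num) hBG
  refine h.congr fun ν => ?_
  simp only [Scal1, Pi.div_apply]
  rw [div_mul_div_comm, neg_mul, ← mul_assoc]
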